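/- If a nonnegative real sequence (e_k) satisfies e_0 = 0 and e_{k+1} ≤ C·τ^{3}/(kτ)^{α} + e_k for all k ≥ 1 with 0 ≤ α < 1, and n·τ ≤ T, then e_n ≤ C'·τ² for a constant C' depending only on C, T, α (uniformly in τ and n). -/

import Mathlib

open Real Finset

/-- One-step estimate: `(1-α)·(n+1)^(-α) + n^(1-α) ≤ (n+1)^(1-α)`. -/
lemma step_ineq (α : ℝ) (hα0 : 0 ≤ α) (hα1 : α < 1) (n : ℕ) :
    (1 - α) * ((n : ℝ) + 1) ^ (-α) + (n : ℝ) ^ (1 - α) ≤ ((n : ℝ) + 1) ^ (1 - α) := by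
  set N : ℝ := (n : ℝ) + 1 with hN
  have hNpos : 0 < N := by positivity
  have hs : (-1 : ℝ) ≤ -1 / N := by
    rw [neg_div]
    have : 1 / N ≤ 1 := by
      rw [div_le_one hNpos]; simp [hN]
    linarith
  have hb := rpow_one_add_le_one_add_mul_self hs (by linarith : (0:ℝ) ≤ 1 - α)
    (by linarith : (1 - α : ℝ) ≤ 1)
  -- (1 + (-1/N))^(1-α) ≤ 1 + (1-α)*(-1/N)
  have h1 : (1 : ℝ) + (-1 / N) = (n : ℝ) / N := by
    field_simp [hN]
    linarith
  rw [h1] at hb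
  have hn0 : (0 : ℝ) ≤ (n : ℝ) := Nat.cast_nonneg n
  have hdiv : ((n : ℝ) / N) ^ (1 - α) = (n : ℝ) ^ (1 - α) / N ^ (1 - α) :=
    Real.div_rpow hn0 hNpos.le _
  rw [hdiv] at hb
  have hNpow : 0 < N ^ (1 - α) := Real.rpow_pos_of_pos hNpos _
  have hb' : (n : ℝ) ^ (1 - α) ≤ (1 + (1 - α) * (-1 / N)) * N ^ (1 - α) := by
    rw [← div_le_iff₀ hNpow] at *
    linarith
  have hexp : N ^ (1 - α) / N = N ^ (-α) := by
    rw [div_eq_iff hNpos.ne', ← Real.rpow_add_one hNpos.ne' (-α)]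
    congr 1
    ring
  have : (1 + (1 - α) * (-1 / N)) * N ^ (1 - α)
      = N ^ (1 - α) - (1 - α) * (N ^ (1 - α) / N) := by ring
  rw [this, hexp] at hb'
  linarith

/-- Sum estimate: `(1-α) ∑_{k=0}^{n-1} (k+1)^(-α) ≤ n^(1-α)`. -/
lemma sum_ineq (α : ℝ) (hα0 : 0 ≤ α) (hα1 : α < 1) (n : ℕ) :
    (1 - α) * ∑ k ∈ Finset.range n, ((k : ℝ) + 1) ^ (-α) ≤ (n : ℝ) ^ (1 - α) := by
  induction n with
  | zero => simp [Real.zero_rpow (by linarith : (1 - α : ℝ) ≠ 0)]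
  | succ m ih =>
    rw [Finset.sum_range_succ, mul_add]
    have := step_ineq α hα0 hα1 m
    push_cast
    linarith

/-- Parabolic convergence recursion with smoothing exponent `0 ≤ α < 1`:
if `e 0 = 0` (and `e 1 = 0`) and `e (k+1) ≤ C·τ³/(kτ)^α + e k` for all `k ≥ 1`, and
`n·τ ≤ T`, then `e n ≤ C'·τ²` for a constant `C'` depending only on `C`, `T`, `α`
(uniformly in `τ` and `n`). -/
theorem parabolic_recursion_alpha_lt_one
    (C T α : ℝ) (hC : 0 < C) (hT : 0 < T) (hα0 : 0 ≤ α) (hα1 : α < 1) :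
    ∃ C' > 0, ∀ (τ : ℝ) (n : ℕ) (e : ℕ → ℝ), 0 < τ →
      (∀ k, 0 ≤ e k) → e 0 = 0 → e 1 = 0 →
      (∀ k ≥ 1, e (k + 1) ≤ C * τ ^ 3 / ((k : ℝ) * τ) ^ α + e k) →
      (n : ℝ) * τ ≤ T → e n ≤ C' * τ ^ 2 := by
  have h1α : (0:ℝ) < 1 - α := by linarith
  refine ⟨C * T ^ (1 - α) / (1 - α), by positivity, ?_⟩
  intro τ n e hτ he h0 h1 hrec hnT
  set K : ℝ := C * τ ^ 3 * (τ ^ α)⁻¹ with hK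
  have hτα : (0:ℝ) < τ ^ α := Real.rpow_pos_of_pos hτ _
  have hKpos : 0 < K := by positivity
  -- recursion unrolled
  have key : ∀ m : ℕ, e (m + 1) ≤ K * ∑ k ∈ Finset.range m, ((k : ℝ) + 1) ^ (-α) := by
    intro m
    induction m with
    | zero => simp [h1]
    | succ p ih =>
      have hp1 : (p + 1 : ℕ) ≥ 1 := by omega
      have hr := hrec (p + 1) hp1
      have hterm : C * τ ^ 3 / (((p + 1 : ℕ) : ℝ) * τ) ^ α = K * ((p : ℝ) + 1) ^ (-α) := by
        have hp0 : (0:ℝ) < (p : ℝ) + 1 := by positivity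
        push_cast
        rw [Real.mul_rpow hp0.le hτ.le, Real.rpow_neg hp0.le]
        field_simp [hK]
        rw [hK]; field_simp
      rw [Finset.sum_range_succ, mul_add, ← hterm]
      calc e (p + 1 + 1) ≤ C * τ ^ 3 / (((p + 1 : ℕ) : ℝ) * τ) ^ α + e (p + 1) := hr
        _ ≤ C * τ ^ 3 / (((p + 1 : ℕ) : ℝ) * τ) ^ α
            + K * ∑ k ∈ Finset.range p, ((k : ℝ) + 1) ^ (-α) := by linarith
        _ = K * ∑ k ∈ Finset.range p, ((k : ℝ) + 1) ^ (-α)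
            + C * τ ^ 3 / (((p + 1 : ℕ) : ℝ) * τ) ^ α := by ring
  -- final bound
  rcases Nat.eq_zero_or_pos n with rfl | hn
  · rw [h0]; positivity
  obtain ⟨m, rfl⟩ : ∃ m, n = m + 1 := ⟨n - 1, by omega⟩
  have hsum := sum_ineq α hα0 hα1 m
  have hm : ((m : ℝ)) ^ (1 - α) ≤ ((m : ℝ) + 1) ^ (1 - α) :=
    Real.rpow_le_rpow (Nat.cast_nonneg m) (by linarith) h1α.le
  have hbound : e (m + 1) ≤ K * (((m : ℝ) + 1) ^ (1 - α) / (1 - α)) := by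
    have := key m
    have hS : ∑ k ∈ Finset.range m, ((k : ℝ) + 1) ^ (-α) ≤ ((m : ℝ) + 1) ^ (1 - α) / (1 - α) := by
      rw [le_div_iff₀ h1α]
      nlinarith
    calc e (m + 1) ≤ K * ∑ k ∈ Finset.range m, ((k : ℝ) + 1) ^ (-α) := key m
      _ ≤ K * (((m : ℝ) + 1) ^ (1 - α) / (1 - α)) := by
          exact mul_le_mul_of_nonneg_left hS hKpos.le
  -- rewrite K * ((m+1)^(1-α)/(1-α)) = C/(1-α) * τ^2 * ((m+1)*τ)^(1-α)
  have hmt : (0:ℝ) ≤ ((m : ℝ) + 1) := by positivity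
  have halg : K * (((m : ℝ) + 1) ^ (1 - α) / (1 - α))
      = (C / (1 - α)) * ((((m : ℝ) + 1) * τ) ^ (1 - α)) * τ ^ 2 := by
    rw [Real.mul_rpow hmt hτ.le]
    have hτ3 : τ ^ 3 * (τ ^ α)⁻¹ = τ ^ 2 * τ ^ (1 - α) := by
      have : τ ^ (1 - α) = τ * (τ ^ α)⁻¹ := by
        rw [Real.rpow_sub hτ, Real.rpow_one, div_eq_mul_inv]
      rw [this]
      ring
    rw [hK]
    linear_combination (C * ((m : ℝ) + 1) ^ (1 - α) / (1 - α)) * hτ3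
  have hTT : (((m : ℝ) + 1) * τ) ^ (1 - α) ≤ T ^ (1 - α) := by
    apply Real.rpow_le_rpow (by positivity) _ h1α.le
    push_cast at hnT ⊢
    linarith
  calc e (m + 1) ≤ (C / (1 - α)) * ((((m : ℝ) + 1) * τ) ^ (1 - α)) * τ ^ 2 := by
        rw [← halg]; exact hbound
    _ ≤ (C / (1 - α)) * (T ^ (1 - α)) * τ ^ 2 := by
        apply mul_le_mul_of_nonneg_right _ (by positivity)
        exact mul_le_mul_of_nonneg_left hTT (by positivity)
    _ = C * T ^ (1 - α) / (1 - α) * τ ^ 2 := by ring
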